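/- arXiv:2007.14649 — 3 statements merged into one kernel-verified Lean document; each statement's English description precedes it below -/
import Mathlib

section
/- Let D be a quasi quantum Poisson algebra that is non-singular and quasi-distinguishing, with basis algebra A = D^0. Then every Ψ in the centralizer C(D) of ad(Z(A)) respects the filtration, i.e., Ψ(D^i) ⊆ D^i for all i ≥ 0. -/
attribute [local instance 100] LieRing.ofAssociativeRing

/-- Let `D = ⋃ᵢ Dⁱ` be a quasi quantum Poisson algebra (a filtered associative unital
algebra over a field `K` of characteristic `0` with `Dⁱ ⊆ Dⁱ⁺¹`, `Dⁱ·Dʲ ⊆ Dⁱ⁺ʲ`,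
`⁅Dⁱ, Dʲ⁆ ⊆ Dⁱ⁺ʲ`, basis `A = D⁰`) which is non-singular and quasi-distinguishing.  Then every
`Ψ` in the centralizer `C(D)` of `ad(Z(A))` respects the filtration: `Ψ(Dⁱ) ⊆ Dⁱ` for all `i`. -/
theorem statement2 {K D : Type*} [Field K] [CharZero K] [Ring D] [Algebra K D]
    (F : ℕ → Submodule K D)
    (hmono : ∀ i, F i ≤ F (i + 1))
    (hmul : ∀ i j, ∀ a ∈ F i, ∀ b ∈ F j, a * b ∈ F (i + j))
    (hbrk : ∀ i j, ∀ a ∈ F i, ∀ b ∈ F j, ⁅a, b⁆ ∈ F (i + j))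
    (hone : (1 : D) ∈ F 0)
    (hunion : ∀ x : D, ∃ i, x ∈ F i)
    -- the center `Z(A)` of the basis algebra `A = D⁰`
    (ZA : Set D) (hZA : ZA = {u : D | u ∈ F 0 ∧ ∀ a ∈ F 0, u * a = a * u})
    -- non-singularity: there is a Lie subalgebra `D¹_A ⊆ D¹` with `Z(A) = ⁅D¹_A, Z(A)⁆`
    (hnonsing : ∃ L : LieSubalgebra K D, (L : Set D) ⊆ F 1 ∧
      ZA = {x : D | ∃ T ∈ L, ∃ u ∈ ZA, x = ⁅T, u⁆})
    -- quasi-distinguishing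
    (hqd0 : ∀ T : D, (∀ u ∈ ZA, ⁅T, u⁆ = 0) → T ∈ F 0)
    (hqd : ∀ i : ℕ, ∀ T : D, (∀ u ∈ ZA, ⁅T, u⁆ ∈ F i) ↔ T ∈ F (i + 1))
    -- an element of the centralizer `C(D)` of `ad(Z(A))`
    (Ψ : D →ₗ[K] D)
    (hΨ : ∀ T : D, ∀ u ∈ ZA, Ψ ⁅T, u⁆ = ⁅Ψ T, u⁆) :
    ∀ i : ℕ, ∀ T ∈ F i, Ψ T ∈ F i := by
  intro i
  induction i with
  | zero =>
    intro T hT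
    apply hqd0
    intro u hu
    rw [← hΨ T u hu]
    have hcomm : ⁅T, u⁆ = 0 := by
      rw [hZA] at hu
      rw [Ring.lie_def, hu.2 T hT, sub_self]
    rw [hcomm, map_zero]
  | succ i ih =>
    intro T hT
    apply (hqd i (Ψ T)).mp
    intro u hu
    rw [← hΨ T u hu]
    exact ih _ (((hqd i T).mpr hT) u hu)
end

section
/- Let D be a quasi quantum Poisson algebra that is non-singular and quasi-distinguishing with basis algebra A. Then every Ψ in the centralizer C(D) of ad(Z(A)) satisfies Ψ(u) = Ψ(1)·u for all u ∈ Z(A). -/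
attribute [local instance 100] LieRing.ofAssociativeRing

/-- Let `D = ⋃ᵢ Dⁱ` be a quasi quantum Poisson algebra (a filtered associative unital
algebra over a field `K` of characteristic `0` with `Dⁱ ⊆ Dⁱ⁺¹`, `Dⁱ·Dʲ ⊆ Dⁱ⁺ʲ`,
`⁅Dⁱ, Dʲ⁆ ⊆ Dⁱ⁺ʲ`, basis `A = D⁰`) which is non-singular and quasi-distinguishing.  Then every
`Ψ` in the centralizer `C(D)` of `ad(Z(A))` satisfies `Ψ(u) = Ψ(1)·u` for all `u ∈ Z(A)`. -/
theorem statement3 {K D : Type*} [Field K] [CharZero K] [Ring D] [Algebra K D]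
    (F : ℕ → Submodule K D)
    (hmono : ∀ i, F i ≤ F (i + 1))
    (hmul : ∀ i j, ∀ a ∈ F i, ∀ b ∈ F j, a * b ∈ F (i + j))
    (hbrk : ∀ i j, ∀ a ∈ F i, ∀ b ∈ F j, ⁅a, b⁆ ∈ F (i + j))
    (hone : (1 : D) ∈ F 0)
    (hunion : ∀ x : D, ∃ i, x ∈ F i)
    -- the center `Z(A)` of the basis algebra `A = D⁰`
    (ZA : Set D) (hZA : ZA = {u : D | u ∈ F 0 ∧ ∀ a ∈ F 0, u * a = a * u})
    -- non-singularity: there is a Lie subalgebra `D¹_A ⊆ D¹` with `Z(A) = ⁅D¹_A, Z(A)⁆`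
    (hnonsing : ∃ L : LieSubalgebra K D, (L : Set D) ⊆ F 1 ∧
      ZA = {x : D | ∃ T ∈ L, ∃ u ∈ ZA, x = ⁅T, u⁆})
    -- quasi-distinguishing
    (hqd0 : ∀ T : D, (∀ u ∈ ZA, ⁅T, u⁆ = 0) → T ∈ F 0)
    (hqd : ∀ i : ℕ, ∀ T : D, (∀ u ∈ ZA, ⁅T, u⁆ ∈ F i) ↔ T ∈ F (i + 1))
    -- an element of the centralizer `C(D)` of `ad(Z(A))`
    (Ψ : D →ₗ[K] D)
    (hΨ : ∀ T : D, ∀ u ∈ ZA, Ψ ⁅T, u⁆ = ⁅Ψ T, u⁆) :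
    ∀ u ∈ ZA, Ψ u = Ψ 1 * u := by
  -- basic facts about ZA
  have hZA0 : ∀ u ∈ ZA, u ∈ F 0 := by
    intro u hu; rw [hZA] at hu; exact hu.1
  have hcomm : ∀ u ∈ ZA, ∀ a ∈ F 0, u * a = a * u := by
    intro u hu; rw [hZA] at hu; exact hu.2
  have hmulZA : ∀ u ∈ ZA, ∀ v ∈ ZA, u * v ∈ ZA := by
    intro u hu v hv
    rw [hZA]
    refine ⟨by simpa using hmul 0 0 u (hZA0 u hu) v (hZA0 v hv), ?_⟩
    intro a ha
    calc u * v * a = u * (v * a) := by rw [mul_assoc]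
      _ = u * (a * v) := by rw [hcomm v hv a ha]
      _ = (u * a) * v := by rw [mul_assoc]
      _ = (a * u) * v := by rw [hcomm u hu a ha]
      _ = a * (u * v) := by rw [mul_assoc]
  have honeZA : (1 : D) ∈ ZA := by
    rw [hZA]; exact ⟨hone, fun a _ => by simp⟩
  -- Ψ maps ZA into F 0
  have hΨF0 : ∀ u ∈ ZA, Ψ u ∈ F 0 := by
    intro u hu
    apply hqd0
    intro v hv
    have h0 : ⁅u, v⁆ = (0 : D) := by
      rw [Ring.lie_def, hcomm u hu v (hZA0 v hv), sub_self]
    rw [← hΨ u v hv, h0, map_zero]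
  obtain ⟨L, hLF, hLeq⟩ := hnonsing
  -- brackets of L with ZA land in ZA
  have hbrZA : ∀ T ∈ L, ∀ v ∈ ZA, ⁅T, v⁆ ∈ ZA := by
    intro T hT v hv
    rw [hLeq]
    exact ⟨T, hT, v, hv, rfl⟩
  -- 1 is a bracket
  have h1br : ∃ T ∈ L, ∃ u ∈ ZA, (1 : D) = ⁅T, u⁆ := by
    have h := honeZA
    rw [hLeq] at h
    exact h
  -- auxiliary ring identities
  have lieA : ∀ a ∈ ZA, ∀ S : D, ∀ w ∈ ZA, ⁅a * S, w⁆ = a * ⁅S, w⁆ := by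
    intro a ha S w hw
    simp only [Ring.lie_def]
    have h1 : w * a = a * w := hcomm w hw a (hZA0 a ha)
    calc a * S * w - w * (a * S) = a * S * w - w * a * S := by rw [mul_assoc w a S]
      _ = a * S * w - a * w * S := by rw [h1]
      _ = a * (S * w) - a * (w * S) := by rw [mul_assoc, mul_assoc]
      _ = a * (S * w - w * S) := by rw [mul_sub]
  have leib : ∀ S u v : D, ⁅S, u * v⁆ = ⁅S, u⁆ * v + u * ⁅S, v⁆ := by
    intro S u v
    simp only [Ring.lie_def]
    noncomm_ring
  -- key identity
  have key : ∀ T ∈ L, ∀ a ∈ ZA, ∀ u ∈ ZA, ∀ v ∈ ZA,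
      (Ψ (a * ⁅T, u⁆ * v) - Ψ (a * ⁅T, u⁆) * v)
        + (Ψ (a * ⁅T, v⁆ * u) - Ψ (a * ⁅T, v⁆) * u) = 0 := by
    intro T hT a ha u hu v hv
    have hTu : ⁅T, u⁆ ∈ ZA := hbrZA T hT u hu
    have hTv : ⁅T, v⁆ ∈ ZA := hbrZA T hT v hv
    have hp : a * ⁅T, u⁆ ∈ ZA := hmulZA a ha _ hTu
    have hq : a * ⁅T, v⁆ ∈ ZA := hmulZA a ha _ hTv
    have huv : u * v ∈ ZA := hmulZA u hu v hv
    have h1 : Ψ ⁅a * T, u * v⁆ = ⁅Ψ (a * T), u * v⁆ := hΨ _ _ huv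
    -- expand left side
    have e1 : ⁅a * T, u * v⁆ = (a * ⁅T, u⁆) * v + (a * ⁅T, v⁆) * u := by
      rw [lieA a ha T _ huv, leib, mul_add]
      congr 1
      · rw [mul_assoc]
      · rw [← hcomm _ hTv u (hZA0 u hu), ← mul_assoc]
    -- expand right side
    have e2 : ⁅Ψ (a * T), u * v⁆ = Ψ (a * ⁅T, u⁆) * v + Ψ (a * ⁅T, v⁆) * u := by
      rw [leib, ← hΨ _ _ hu, ← hΨ _ _ hv, lieA a ha T u hu, lieA a ha T v hv,
        hcomm u hu _ (hΨF0 _ hq)]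
    rw [e1, e2, map_add] at h1
    rw [sub_add_sub_comm, h1, sub_self]
  -- diagonal of the key identity, using char 0
  have diag : ∀ T ∈ L, ∀ a ∈ ZA, ∀ u ∈ ZA,
      Ψ (a * ⁅T, u⁆ * u) = Ψ (a * ⁅T, u⁆) * u := by
    intro T hT a ha u hu
    have h := key T hT a ha u hu u hu
    set x := Ψ (a * ⁅T, u⁆ * u) - Ψ (a * ⁅T, u⁆) * u with hx
    have h2 : (2 : K) • x = 0 := by
      rw [two_smul]; exact h
    have h3 : x = 0 := by
      have := congrArg (fun z => (2 : K)⁻¹ • z) h2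
      simpa [smul_smul] using this
    exact sub_eq_zero.mp h3
  obtain ⟨T₀, hT₀, u₀, hu₀, h1eq⟩ := h1br
  -- B(a, u₀) = 0 for all a ∈ ZA
  have stepB : ∀ a ∈ ZA, Ψ (a * u₀) = Ψ a * u₀ := by
    intro a ha
    have h := diag T₀ hT₀ a ha u₀ hu₀
    rw [← h1eq, mul_one] at h
    exact h
  -- B(a, v) = 0 for all a, v ∈ ZA
  have stepC : ∀ a ∈ ZA, ∀ v ∈ ZA, Ψ (a * v) = Ψ a * v := by
    intro a ha v hv
    have h := key T₀ hT₀ a ha u₀ hu₀ v hv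
    rw [← h1eq, mul_one] at h
    have hz : Ψ (a * ⁅T₀, v⁆ * u₀) - Ψ (a * ⁅T₀, v⁆) * u₀ = 0 := by
      rw [stepB _ (hmulZA a ha _ (hbrZA T₀ hT₀ v hv)), sub_self]
    rw [hz, add_zero] at h
    exact sub_eq_zero.mp h
  intro u hu
  have := stepC 1 honeZA u hu
  rwa [one_mul] at this
end

section
/- Let D₁, D₂ be quasi quantum Poisson algebras over a field K of characteristic 0, both non-singular and quasi-distinguishing with bases A₁, A₂. Let Φ : D₁ → D₂ be a Lie algebra isomorphism with Φ(Z(A₁)) = Z(A₂). Then Φ respects the filtration (Φ(D₁^i) ⊆ D₂^i for all i), Φ restricts to a Lie algebra isomorphism A₁ → A₂, and there exist an invertible central element κ ∈ D₂ and an associative algebra isomorphism Ψ : Z(A₁) → Z(A₂) such that Φ|_{Z(A₁)} = κΨ. -/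
attribute [local instance 100] LieRing.ofAssociativeRing

/-- Let `D₁, D₂` be quasi quantum Poisson algebras over a field `K` of characteristic
`0`, both non-singular and quasi-distinguishing, with bases `A₁ = D₁⁰`, `A₂ = D₂⁰`.  Let
`Φ : D₁ → D₂` be a Lie algebra isomorphism with `Φ(Z(A₁)) = Z(A₂)`.  Then `Φ` respects the
filtration, restricts to a Lie algebra isomorphism `A₁ → A₂` (i.e. `Φ(A₁) = A₂`), and there are
an invertible central element `κ ∈ D₂` and an associative algebra isomorphism
`Ψ : Z(A₁) → Z(A₂)` with `Φ|_{Z(A₁)} = κΨ` (equivalently `κ·Φ(uv) = Φ(u)·Φ(v)` on `Z(A₁)`). -/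
theorem statement7 {K D₁ D₂ : Type*} [Field K] [CharZero K]
    [Ring D₁] [Algebra K D₁] [Ring D₂] [Algebra K D₂]
    (F₁ : ℕ → Submodule K D₁) (F₂ : ℕ → Submodule K D₂)
    (hmono₁ : ∀ i, F₁ i ≤ F₁ (i + 1)) (hmono₂ : ∀ i, F₂ i ≤ F₂ (i + 1))
    (hmul₁ : ∀ i j, ∀ a ∈ F₁ i, ∀ b ∈ F₁ j, a * b ∈ F₁ (i + j))
    (hmul₂ : ∀ i j, ∀ a ∈ F₂ i, ∀ b ∈ F₂ j, a * b ∈ F₂ (i + j))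
    (hbrk₁ : ∀ i j, ∀ a ∈ F₁ i, ∀ b ∈ F₁ j, ⁅a, b⁆ ∈ F₁ (i + j))
    (hbrk₂ : ∀ i j, ∀ a ∈ F₂ i, ∀ b ∈ F₂ j, ⁅a, b⁆ ∈ F₂ (i + j))
    (hone₁ : (1 : D₁) ∈ F₁ 0) (hone₂ : (1 : D₂) ∈ F₂ 0)
    (hunion₁ : ∀ x : D₁, ∃ i, x ∈ F₁ i) (hunion₂ : ∀ x : D₂, ∃ i, x ∈ F₂ i)
    (ZA₁ : Set D₁) (hZA₁ : ZA₁ = {u : D₁ | u ∈ F₁ 0 ∧ ∀ a ∈ F₁ 0, u * a = a * u})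
    (ZA₂ : Set D₂) (hZA₂ : ZA₂ = {u : D₂ | u ∈ F₂ 0 ∧ ∀ a ∈ F₂ 0, u * a = a * u})
    (hnonsing₁ : ∃ L : LieSubalgebra K D₁, (L : Set D₁) ⊆ F₁ 1 ∧
      ZA₁ = {x : D₁ | ∃ T ∈ L, ∃ u ∈ ZA₁, x = ⁅T, u⁆})
    (hnonsing₂ : ∃ L : LieSubalgebra K D₂, (L : Set D₂) ⊆ F₂ 1 ∧
      ZA₂ = {x : D₂ | ∃ T ∈ L, ∃ u ∈ ZA₂, x = ⁅T, u⁆})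
    (hqd0₁ : ∀ T : D₁, (∀ u ∈ ZA₁, ⁅T, u⁆ = 0) → T ∈ F₁ 0)
    (hqd₁ : ∀ i : ℕ, ∀ T : D₁, (∀ u ∈ ZA₁, ⁅T, u⁆ ∈ F₁ i) ↔ T ∈ F₁ (i + 1))
    (hqd0₂ : ∀ T : D₂, (∀ u ∈ ZA₂, ⁅T, u⁆ = 0) → T ∈ F₂ 0)
    (hqd₂ : ∀ i : ℕ, ∀ T : D₂, (∀ u ∈ ZA₂, ⁅T, u⁆ ∈ F₂ i) ↔ T ∈ F₂ (i + 1))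
    (Φ : D₁ ≃ₗ⁅K⁆ D₂)
    (hΦZ : Φ '' ZA₁ = ZA₂) :
    (∀ i : ℕ, ∀ T ∈ F₁ i, Φ T ∈ F₂ i) ∧
    (Φ '' (F₁ 0 : Set D₁) = (F₂ 0 : Set D₂)) ∧
    (∃ κ : D₂, (∀ d : D₂, κ * d = d * κ) ∧ IsUnit κ ∧
      ∀ u ∈ ZA₁, ∀ v ∈ ZA₁, κ * Φ (u * v) = Φ u * Φ v) := by
  classical
  have hinj : Function.Injective Φ := Φ.injective
  have Φzero : Φ (0 : D₁) = 0 := by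
    have h := Φ.map_sub 0 0; rwa [sub_self, sub_self] at h
  have Φszero : Φ.symm (0 : D₂) = 0 := by
    have h := Φ.symm.map_sub 0 0; rwa [sub_self, sub_self] at h
  have Φadd : ∀ x y : D₁, Φ (x + y) = Φ x + Φ y := fun x y => Φ.map_add x y
  have z1mem : ∀ u ∈ ZA₁, u ∈ F₁ 0 := by
    intro u hu; rw [hZA₁] at hu; exact hu.1
  have z1c : ∀ u ∈ ZA₁, ∀ a ∈ F₁ 0, u * a = a * u := by
    intro u hu; rw [hZA₁] at hu; exact hu.2
  have z2mem : ∀ u ∈ ZA₂, u ∈ F₂ 0 := by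
    intro u hu; rw [hZA₂] at hu; exact hu.1
  have z2c : ∀ u ∈ ZA₂, ∀ a ∈ F₂ 0, u * a = a * u := by
    intro u hu; rw [hZA₂] at hu; exact hu.2
  have z1one : (1 : D₁) ∈ ZA₁ := by
    rw [hZA₁]; exact ⟨hone₁, fun a _ => by rw [one_mul, mul_one]⟩
  have z2one : (1 : D₂) ∈ ZA₂ := by
    rw [hZA₂]; exact ⟨hone₂, fun a _ => by rw [one_mul, mul_one]⟩
  have z1mul : ∀ u ∈ ZA₁, ∀ v ∈ ZA₁, u * v ∈ ZA₁ := by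
    intro u hu v hv
    rw [hZA₁]
    refine ⟨by simpa using hmul₁ 0 0 u (z1mem u hu) v (z1mem v hv), fun a ha => ?_⟩
    rw [mul_assoc, z1c v hv a ha, ← mul_assoc, z1c u hu a ha, mul_assoc]
  have z2mul : ∀ u ∈ ZA₂, ∀ v ∈ ZA₂, u * v ∈ ZA₂ := by
    intro u hu v hv
    rw [hZA₂]
    refine ⟨by simpa using hmul₂ 0 0 u (z2mem u hu) v (z2mem v hv), fun a ha => ?_⟩
    rw [mul_assoc, z2c v hv a ha, ← mul_assoc, z2c u hu a ha, mul_assoc]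
  have z1sub : ∀ u ∈ ZA₁, ∀ v ∈ ZA₁, u - v ∈ ZA₁ := by
    intro u hu v hv
    rw [hZA₁]
    refine ⟨sub_mem (z1mem u hu) (z1mem v hv), fun a ha => ?_⟩
    rw [sub_mul, mul_sub, z1c u hu a ha, z1c v hv a ha]
  have zc1 : ∀ u ∈ ZA₁, ∀ v ∈ ZA₁, u * v = v * u := fun u hu v hv =>
    z1c u hu v (z1mem v hv)
  have zc2 : ∀ u ∈ ZA₂, ∀ v ∈ ZA₂, u * v = v * u := fun u hu v hv =>
    z2c u hu v (z2mem v hv)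
  obtain ⟨L₁, hL₁sub, hL₁eq⟩ := hnonsing₁
  have lieZ₁ : ∀ T ∈ L₁, ∀ z ∈ ZA₁, ⁅T, z⁆ ∈ ZA₁ := by
    intro T hT z hz; rw [hL₁eq]; exact ⟨T, hT, z, hz, rfl⟩
  have nz₁ : ∀ v ∈ ZA₁, ∃ T ∈ L₁, ∃ z ∈ ZA₁, v = ⁅T, z⁆ := by
    intro v hv; rw [hL₁eq] at hv; exact hv
  have ΦZ : ∀ u ∈ ZA₁, Φ u ∈ ZA₂ := fun u hu => hΦZ ▸ Set.mem_image_of_mem _ hu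
  have Φsurj : ∀ v ∈ ZA₂, ∃ u ∈ ZA₁, Φ u = v := by
    intro v hv; rw [← hΦZ] at hv; obtain ⟨u, hu, h⟩ := hv; exact ⟨u, hu, h⟩
  have symmZ : ∀ v ∈ ZA₂, Φ.symm v ∈ ZA₁ := by
    intro v hv
    obtain ⟨u, hu, rfl⟩ := Φsurj v hv
    rwa [Φ.symm_apply_apply]
  have leib₁ : ∀ x a b : D₁, ⁅x, a * b⁆ = ⁅x, a⁆ * b + a * ⁅x, b⁆ := by
    intro x a b; simp only [Ring.lie_def]; noncomm_ring
  have leib₂ : ∀ x a b : D₂, ⁅x, a * b⁆ = ⁅x, a⁆ * b + a * ⁅x, b⁆ := by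
    intro x a b; simp only [Ring.lie_def]; noncomm_ring
  have lieone₁ : ∀ x : D₁, ⁅x, (1 : D₁)⁆ = 0 := by intro x; simp [Ring.lie_def]
  have lie0₁ : ∀ T ∈ F₁ 0, ∀ u ∈ ZA₁, ⁅T, u⁆ = 0 := by
    intro T hT u hu
    rw [Ring.lie_def, sub_eq_zero]
    exact (z1c u hu T hT).symm
  have part1 : ∀ i : ℕ, ∀ T ∈ F₁ i, Φ T ∈ F₂ i := by
    intro i
    induction i with
    | zero =>
      intro T hT
      apply hqd0₂
      intro v hv
      obtain ⟨u, hu, rfl⟩ := Φsurj v hv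
      rw [← Φ.map_lie, lie0₁ T hT u hu, Φzero]
    | succ i ih =>
      intro T hT
      rw [← hqd₂ i]
      intro v hv
      obtain ⟨u, hu, rfl⟩ := Φsurj v hv
      rw [← Φ.map_lie]
      exact ih _ ((hqd₁ i T).mpr hT u hu)
  refine ⟨part1, ?_, ?_⟩
  · apply Set.Subset.antisymm
    · rintro y ⟨T, hT, rfl⟩
      exact part1 0 T hT
    · intro y hy
      refine ⟨Φ.symm y, ?_, Φ.apply_symm_apply y⟩
      apply hqd0₁
      intro u hu
      apply hinj
      rw [Φ.map_lie, Φ.apply_symm_apply, Φzero, Ring.lie_def, sub_eq_zero]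
      exact (z2c (Φ u) (ΦZ u hu) y hy).symm
  · -- Part 3
    set g : D₁ → D₁ → D₁ := fun x y => Φ.symm (Φ x * Φ y) with hg
    have gΦ : ∀ x y : D₁, Φ (g x y) = Φ x * Φ y := by
      intro x y; rw [hg]; exact Φ.apply_symm_apply _
    have gZ : ∀ a ∈ ZA₁, ∀ b ∈ ZA₁, g a b ∈ ZA₁ := fun a ha b hb =>
      symmZ _ (z2mul _ (ΦZ a ha) _ (ΦZ b hb))
    have g0 : ∀ y : D₁, g 0 y = 0 := by
      intro y; rw [hg]; simp only []; rw [Φzero, zero_mul, Φszero]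
    have gsym : ∀ a ∈ ZA₁, ∀ b ∈ ZA₁, g a b = g b a := by
      intro a ha b hb
      rw [hg]; simp only []
      rw [zc2 _ (ΦZ a ha) _ (ΦZ b hb)]
    have fact3 : ∀ u w T : D₁, u * w = w * u → ⁅u * T, w⁆ = u * ⁅T, w⁆ := by
      intro u w T h
      rw [Ring.lie_def, Ring.lie_def, mul_sub]
      congr 1
      · rw [mul_assoc]
      · rw [← mul_assoc, ← h, mul_assoc]
    have P1 : ∀ u ∈ ZA₁, ∀ T ∈ L₁, ∀ a ∈ ZA₁, ∀ b ∈ ZA₁,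
        u * ⁅T, g a b⁆ = g (u * ⁅T, a⁆) b + g a (u * ⁅T, b⁆) := by
      intro u hu T hT a ha b hb
      apply hinj
      rw [← fact3 u (g a b) T (zc1 u hu _ (gZ a ha b hb)), Φ.map_lie, gΦ, leib₂,
        ← Φ.map_lie, ← Φ.map_lie, fact3 u a T (zc1 u hu a ha),
        fact3 u b T (zc1 u hu b hb), Φadd, gΦ, gΦ]
    obtain ⟨S₀, hS₀, z₀, hz₀, hz1⟩ := nz₁ 1 z1one
    set c : D₁ := ⁅S₀, g 1 z₀⁆ with hc
    have hcZ : c ∈ ZA₁ := lieZ₁ S₀ hS₀ _ (gZ 1 z1one z₀ hz₀)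
    have A : ∀ u ∈ ZA₁, g 1 u = u * c := by
      intro u hu
      have h := P1 u hu S₀ hS₀ 1 z1one z₀ hz₀
      rw [lieone₁, mul_zero, g0, zero_add, ← hz1, mul_one] at h
      rw [hc]
      exact h.symm
    have hc11 : g 1 1 = c := by rw [A 1 z1one, one_mul]
    have cconst : ∀ T : D₁, ⁅T, c⁆ = 0 := by
      intro T
      apply hinj
      rw [Φ.map_lie, Φzero, ← hc11, gΦ, leib₂, ← Φ.map_lie, lieone₁,
        Φzero, zero_mul, mul_zero, add_zero]
    have hswap : ∀ x y z : D₁, x * y = y * x → x * (y * z) = y * (x * z) := by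
      intro x y z h; rw [← mul_assoc, h, mul_assoc]
    have C : ∀ a ∈ ZA₁, ∀ v ∈ ZA₁,
        g a v - c * (a * v)
          = v * ⁅S₀, g a z₀ - c * (a * z₀)⁆
            - (g (v * ⁅S₀, a⁆) z₀ - c * (v * ⁅S₀, a⁆ * z₀)) := by
      intro a ha v hv
      have E1 : v * ⁅S₀, g a z₀⁆ = g (v * ⁅S₀, a⁆) z₀ + g a v := by
        have h := P1 v hv S₀ hS₀ a ha z₀ hz₀
        rw [← hz1, mul_one] at h
        exact h
      have E2 : v * ⁅S₀, c * (a * z₀)⁆ = c * (v * ⁅S₀, a⁆ * z₀) + c * (a * v) := by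
        rw [leib₁ S₀ c (a * z₀), cconst S₀, zero_mul, zero_add, leib₁ S₀ a z₀,
          ← hz1, mul_one, mul_add, mul_add,
          hswap v c (⁅S₀, a⁆ * z₀) (zc1 v hv c hcZ),
          hswap v c a (zc1 v hv c hcZ),
          ← mul_assoc v ⁅S₀, a⁆ z₀, zc1 v hv a ha]
      rw [lie_sub, mul_sub, E1, E2]
      abel
    have key : ∀ v ∈ ZA₁,
        (g v z₀ - c * (v * z₀)) + (g v z₀ - c * (v * z₀))
          = v * ⁅S₀, g z₀ z₀ - c * (z₀ * z₀)⁆ := by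
      intro v hv
      have h := C z₀ hz₀ v hv
      rw [← hz1, mul_one, gsym z₀ hz₀ v hv, zc1 z₀ hz₀ v hv] at h
      have h2 := congrArg (fun t => t + (g v z₀ - c * (v * z₀))) h
      rw [sub_add_cancel] at h2
      exact h2
    have φ1 : g 1 z₀ - c * (1 * z₀) = 0 := by
      rw [A z₀ hz₀, one_mul, zc1 z₀ hz₀ c hcZ, sub_self]
    have m0 : ⁅S₀, g z₀ z₀ - c * (z₀ * z₀)⁆ = (0 : D₁) := by
      have h := key 1 z1one
      rw [φ1, add_zero, one_mul] at h
      exact h.symm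
    have φ0 : ∀ v ∈ ZA₁, g v z₀ - c * (v * z₀) = 0 := by
      intro v hv
      have h := key v hv
      rw [m0, mul_zero] at h
      have hK : (2 : K) ≠ 0 := two_ne_zero
      have h2 : (2 : K) • (g v z₀ - c * (v * z₀)) = 0 := by rw [two_smul]; exact h
      calc g v z₀ - c * (v * z₀)
          = ((2 : K)⁻¹ * 2) • (g v z₀ - c * (v * z₀)) := by
            rw [inv_mul_cancel₀ hK, one_smul]
        _ = (2 : K)⁻¹ • ((2 : K) • (g v z₀ - c * (v * z₀))) := by rw [mul_smul]
        _ = 0 := by rw [h2, smul_zero]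
    have gc : ∀ a ∈ ZA₁, ∀ b ∈ ZA₁, g a b = c * (a * b) := by
      intro a ha b hb
      have h := C a ha b hb
      rw [φ0 a ha, lie_zero, mul_zero,
        φ0 (b * ⁅S₀, a⁆) (z1mul b hb _ (lieZ₁ S₀ hS₀ a ha)), sub_zero] at h
      exact sub_eq_zero.mp h
    have hcent : ∀ d : D₂, Φ 1 * d = d * Φ 1 := by
      intro d
      have h0 : ⁅(1 : D₁), Φ.symm d⁆ = 0 := by simp [Ring.lie_def]
      have h : ⁅Φ 1, d⁆ = 0 := by
        calc ⁅Φ 1, d⁆ = ⁅Φ 1, Φ (Φ.symm d)⁆ := by rw [Φ.apply_symm_apply]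
          _ = Φ ⁅1, Φ.symm d⁆ := (Φ.map_lie _ _).symm
          _ = 0 := by rw [h0, Φzero]
      rw [Ring.lie_def] at h
      exact sub_eq_zero.mp h
    refine ⟨Φ 1, hcent, ?_, ?_⟩
    · have hw : Φ.symm 1 ∈ ZA₁ := symmZ 1 z2one
      have hww : Φ.symm 1 * Φ.symm 1 ∈ ZA₁ := z1mul _ hw _ hw
      have h1 : Φ 1 * Φ (Φ.symm 1 * Φ.symm 1) = 1 := by
        have e2 : Φ (g (Φ.symm 1) (Φ.symm 1)) = 1 := by
          rw [gΦ, Φ.apply_symm_apply, one_mul]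
        rw [gc _ hw _ hw] at e2
        calc Φ 1 * Φ (Φ.symm 1 * Φ.symm 1) = Φ (g 1 (Φ.symm 1 * Φ.symm 1)) :=
            (gΦ _ _).symm
          _ = Φ (c * (1 * (Φ.symm 1 * Φ.symm 1))) := by rw [gc 1 z1one _ hww]
          _ = Φ (c * (Φ.symm 1 * Φ.symm 1)) := by rw [one_mul]
          _ = 1 := e2
      exact ⟨⟨Φ 1, Φ (Φ.symm 1 * Φ.symm 1), h1, by rw [← hcent]; exact h1⟩, rfl⟩
    · intro u hu v hv
      have huv := z1mul u hu v hv
      calc Φ 1 * Φ (u * v) = Φ (g 1 (u * v)) := (gΦ _ _).symm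
        _ = Φ (c * (1 * (u * v))) := by rw [gc 1 z1one _ huv]
        _ = Φ (c * (u * v)) := by rw [one_mul]
        _ = Φ (g u v) := by rw [gc u hu v hv]
        _ = Φ u * Φ v := gΦ _ _
end
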